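/- Define the operators K_W := ½(W·Σ_{i=1}^d(S_i*+S_i) + Σ_{i=1}^d(S_i*+S_i)·W) and B_W := Σ_{i=1}^d (U_i·W̃·(S_i*−S_i) − (S_i*−S_i)·W̃·U_i) on ℓ²(ℤ^d). Then K_W is a compact operator, B_W is a bounded operator, and for every finitely supported u ∈ ℓ²(ℤ^d) one has i(W(A₀u) − A₀(Wu)) = (K_W + B_W)u; that is, the commutator form [W, iA₀] extends to the bounded operator K_W + B_W. -/

import Mathlib

noncomputable section

open scoped ENNReal

/-- The Hilbert space ℓ²(ℤ^d). -/
abbrev l2Zd (d : ℕ) : Type := lp (fun _ : Fin d → ℤ => ℂ) 2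

/-- The generator of dilations A₀ := i Σ_{i=1}^d (½(S_i*+S_i) − (S_i*−S_i)N_i), acting on
functions ℤ^d → ℂ. -/
def A0fun (d : ℕ) (u : (Fin d → ℤ) → ℂ) (n : Fin d → ℤ) : ℂ :=
  Complex.I * ∑ i : Fin d,
    ((u (Function.update n i (n i + 1)) + u (Function.update n i (n i - 1))) / 2 -
      (((n i : ℂ) + 1) * u (Function.update n i (n i + 1)) -
        ((n i : ℂ) - 1) * u (Function.update n i (n i - 1))))

/-- The Wigner-von Neumann potential W(n) = q·sin(k(n₁+…+n_d))/|n|, with W(0) = q. -/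
def WvN (d : ℕ) (q k : ℝ) (n : Fin d → ℤ) : ℝ :=
  if n = 0 then q
  else q * Real.sin (k * ∑ i, (n i : ℝ)) / Real.sqrt (∑ i, (n i : ℝ) ^ 2)

/-- W̃(n) = q·sin(k(n₁+…+n_d)). -/
def WvNt (d : ℕ) (q k : ℝ) (n : Fin d → ℤ) : ℝ := q * Real.sin (k * ∑ i, (n i : ℝ))

/-- U_i(n) = n_i/|n|, with U_i(0) = 0. -/
def Ufun (d : ℕ) (i : Fin d) (n : Fin d → ℤ) : ℝ :=
  if n = 0 then 0 else (n i : ℝ) / Real.sqrt (∑ j, (n j : ℝ) ^ 2)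

/-- K_W = ½(W·Σ_i(S_i*+S_i) + Σ_i(S_i*+S_i)·W), acting on functions. -/
def KWfun (d : ℕ) (q k : ℝ) (u : (Fin d → ℤ) → ℂ) (n : Fin d → ℤ) : ℂ :=
  (1 / 2 : ℂ) *
    ((WvN d q k n : ℂ) * ∑ i : Fin d,
        (u (Function.update n i (n i + 1)) + u (Function.update n i (n i - 1))) +
      ∑ i : Fin d,
        ((WvN d q k (Function.update n i (n i + 1)) : ℂ) * u (Function.update n i (n i + 1)) +
          (WvN d q k (Function.update n i (n i - 1)) : ℂ) * u (Function.update n i (n i - 1))))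

/-- B_W = Σ_i (U_i·W̃·(S_i*−S_i) − (S_i*−S_i)·W̃·U_i), acting on functions. -/
def BWfun (d : ℕ) (q k : ℝ) (u : (Fin d → ℤ) → ℂ) (n : Fin d → ℤ) : ℂ :=
  ∑ i : Fin d,
    ((Ufun d i n : ℂ) * (WvNt d q k n : ℂ) *
        (u (Function.update n i (n i + 1)) - u (Function.update n i (n i - 1))) -
      ((WvNt d q k (Function.update n i (n i + 1)) : ℂ) *
          (Ufun d i (Function.update n i (n i + 1)) : ℂ) * u (Function.update n i (n i + 1)) -
        (WvNt d q k (Function.update n i (n i - 1)) : ℂ) *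
          (Ufun d i (Function.update n i (n i - 1)) : ℂ) * u (Function.update n i (n i - 1))))


noncomputable section
open scoped ENNReal

set_option linter.unusedSectionVars false
namespace CommAux

variable {ι : Type*} [DecidableEq ι]

local notation "H" => lp (fun _ : ι => ℂ) 2

lemma two_toReal : ((2:ℝ≥0∞)).toReal = 2 := by norm_num
lemma two_toReal_pos : 0 < ((2:ℝ≥0∞)).toReal := by norm_num

lemma mulMem (f : ι → ℂ) (C : ℝ) (hC : ∀ i, ‖f i‖ ≤ C) (u : H) :
    Memℓp (fun i => f i * u i) 2 := by
  apply memℓp_gen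
  have hu := (lp.memℓp u).summable two_toReal_pos
  refine Summable.of_nonneg_of_le (fun i => ?_) (fun i => ?_)
    (hu.mul_left ((max C 0) ^ ((2:ℝ≥0∞)).toReal))
  · positivity
  · have h1 : ‖f i * u i‖ ≤ max C 0 * ‖u i‖ := by
      rw [norm_mul]
      exact mul_le_mul_of_nonneg_right ((hC i).trans (le_max_left _ _)) (norm_nonneg _)
    calc ‖f i * u i‖ ^ ((2:ℝ≥0∞)).toReal ≤ (max C 0 * ‖u i‖) ^ ((2:ℝ≥0∞)).toReal := by
          exact Real.rpow_le_rpow (norm_nonneg _) h1 (by norm_num)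
      _ = max C 0 ^ ((2:ℝ≥0∞)).toReal * ‖u i‖ ^ ((2:ℝ≥0∞)).toReal :=
          Real.mul_rpow (le_max_right _ _) (norm_nonneg _)

/-- Multiplication operator on ℓ². -/
def mulCLM (f : ι → ℂ) (C : ℝ) (hC : ∀ i, ‖f i‖ ≤ C) : H →L[ℂ] H :=
  LinearMap.mkContinuous
    { toFun := fun u => ⟨fun i => f i * u i, mulMem f C hC u⟩
      map_add' := fun u v => lp.ext (funext fun i => by
        simp only [lp.coeFn_add, Pi.add_apply]
        change f i * (u i + v i) = f i * u i + f i * v i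
        ring)
      map_smul' := fun c u => lp.ext (funext fun i => by
        simp only [lp.coeFn_smul, Pi.smul_apply, RingHom.id_apply]
        change f i * (c • u i) = c • (f i * u i)
        simp [smul_eq_mul]; ring) }
    (max C 0)
    (fun u => by
      refine lp.norm_le_of_forall_sum_le two_toReal_pos
        (mul_nonneg (le_max_right _ _) (norm_nonneg _)) (fun s => ?_)
      have hmm : ∀ i ∈ s, ‖f i * u i‖ ^ ((2:ℝ≥0∞)).toReal ≤
          max C 0 ^ ((2:ℝ≥0∞)).toReal * ‖u i‖ ^ ((2:ℝ≥0∞)).toReal := by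
        intro i _
        have h1 : ‖f i * u i‖ ≤ max C 0 * ‖u i‖ := by
          rw [norm_mul]
          exact mul_le_mul_of_nonneg_right ((hC i).trans (le_max_left _ _)) (norm_nonneg _)
        calc ‖f i * u i‖ ^ ((2:ℝ≥0∞)).toReal ≤ (max C 0 * ‖u i‖) ^ ((2:ℝ≥0∞)).toReal :=
              Real.rpow_le_rpow (norm_nonneg _) h1 (by norm_num)
          _ = _ := Real.mul_rpow (le_max_right _ _) (norm_nonneg _)
      calc (∑ i ∈ s, ‖(fun i => f i * u i) i‖ ^ ((2:ℝ≥0∞)).toReal)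
          ≤ ∑ i ∈ s, max C 0 ^ ((2:ℝ≥0∞)).toReal * ‖u i‖ ^ ((2:ℝ≥0∞)).toReal :=
            Finset.sum_le_sum hmm
        _ = max C 0 ^ ((2:ℝ≥0∞)).toReal * ∑ i ∈ s, ‖u i‖ ^ ((2:ℝ≥0∞)).toReal := by
            rw [Finset.mul_sum]
        _ ≤ max C 0 ^ ((2:ℝ≥0∞)).toReal * ‖u‖ ^ ((2:ℝ≥0∞)).toReal := by
            have := lp.sum_rpow_le_norm_rpow two_toReal_pos u s
            gcongr <;> positivity
        _ = (max C 0 * ‖u‖) ^ ((2:ℝ≥0∞)).toReal :=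
            (Real.mul_rpow (le_max_right _ _) (norm_nonneg _)).symm)

@[simp] lemma mulCLM_apply (f : ι → ℂ) (C : ℝ) (hC : ∀ i, ‖f i‖ ≤ C) (u : H) (i : ι) :
    (mulCLM f C hC u) i = f i * u i := rfl

lemma mulCLM_norm_le (f : ι → ℂ) (C : ℝ) (hC : ∀ i, ‖f i‖ ≤ C) :
    ‖mulCLM f C hC‖ ≤ max C 0 :=
  LinearMap.mkContinuous_norm_le _ (le_max_right _ _) _

lemma shiftMem (e : ι ≃ ι) (u : H) : Memℓp (fun i => u (e i)) 2 := by
  apply memℓp_gen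
  have hu := (lp.memℓp u).summable two_toReal_pos
  exact (e.summable_iff (f := fun j => ‖u j‖ ^ ((2:ℝ≥0∞)).toReal)).2 hu

/-- Composition with a bijection of the index set. -/
def shiftCLM (e : ι ≃ ι) : H →L[ℂ] H :=
  LinearMap.mkContinuous
    { toFun := fun u => ⟨fun i => u (e i), shiftMem e u⟩
      map_add' := fun u v => lp.ext (funext fun i => by
        simp only [lp.coeFn_add, Pi.add_apply])
      map_smul' := fun c u => lp.ext (funext fun i => by
        simp only [lp.coeFn_smul, Pi.smul_apply, RingHom.id_apply]) }
    1
    (fun u => by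
      rw [one_mul]
      refine lp.norm_le_of_forall_sum_le two_toReal_pos (norm_nonneg _) (fun s => ?_)
      have : (∑ i ∈ s, ‖u (e i)‖ ^ ((2:ℝ≥0∞)).toReal)
          = ∑ j ∈ s.image e, ‖u j‖ ^ ((2:ℝ≥0∞)).toReal := by
        rw [Finset.sum_image (fun a _ b _ h => e.injective h)]
      calc (∑ i ∈ s, ‖(fun i => u (e i)) i‖ ^ ((2:ℝ≥0∞)).toReal)
          = ∑ j ∈ s.image e, ‖u j‖ ^ ((2:ℝ≥0∞)).toReal := this
        _ ≤ ‖u‖ ^ ((2:ℝ≥0∞)).toReal := lp.sum_rpow_le_norm_rpow two_toReal_pos u _)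

@[simp] lemma shiftCLM_apply (e : ι ≃ ι) (u : H) (i : ι) :
    (shiftCLM e u) i = u (e i) := rfl

/-- Evaluation functional on ℓ². -/
def evalCLM (i : ι) : H →L[ℂ] ℂ :=
  LinearMap.mkContinuous
    { toFun := fun u => u i
      map_add' := fun u v => by simp [lp.coeFn_add]
      map_smul' := fun c u => by simp [lp.coeFn_smul] }
    1
    (fun u => by
      rw [one_mul]
      exact lp.norm_apply_le_norm (by norm_num) u i)

@[simp] lemma evalCLM_apply (i : ι) (u : H) : evalCLM i u = u i := rfl

end CommAux

namespace CommAux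

variable {ι : Type*} [DecidableEq ι]

local notation "H" => lp (fun _ : ι => ℂ) 2

lemma isCompactOperator_smulRight (φ : H →L[ℂ] ℂ) (v : H) :
    IsCompactOperator (fun u : H => φ u • v) := by
  refine ⟨(fun c : ℂ => c • v) '' Metric.closedBall 0 ‖φ‖, ?_, ?_⟩
  · exact ((isCompact_closedBall (0:ℂ) ‖φ‖).image (by continuity))
  · refine Filter.mem_of_superset (Metric.closedBall_mem_nhds (0:H) one_pos) ?_
    intro u hu
    refine ⟨φ u, ?_, rfl⟩
    rw [Metric.mem_closedBall, dist_zero_right]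
    calc ‖φ u‖ ≤ ‖φ‖ * ‖u‖ := φ.le_opNorm u
      _ ≤ ‖φ‖ * 1 := by
          have : ‖u‖ ≤ 1 := by simpa [dist_zero_right] using Metric.mem_closedBall.1 hu
          exact mul_le_mul_of_nonneg_left this (norm_nonneg _)
      _ = ‖φ‖ := mul_one _

lemma isCompactOperator_finsetSum {κ : Type*} (s : Finset κ) (T : κ → (H →L[ℂ] H))
    (h : ∀ i ∈ s, IsCompactOperator ⇑(T i)) :
    IsCompactOperator ⇑(∑ i ∈ s, T i) := by
  classical
  induction s using Finset.induction_on with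
  | empty => simpa using (isCompactOperator_zero : IsCompactOperator (0 : H → H))
  | insert _ _ hx ih =>
    rename_i a t
    rw [Finset.sum_insert hx]
    have hsum := (h a (Finset.mem_insert_self a t)).add
      (ih (fun i hi => h i (Finset.mem_insert_of_mem hi)))
    exact hsum

lemma mulCLM_eq_sum_of_finite (f : ι → ℂ) (C : ℝ) (hC : ∀ i, ‖f i‖ ≤ C)
    (hf : {i | f i ≠ 0}.Finite) :
    mulCLM f C hC =
      ∑ i ∈ hf.toFinset, (evalCLM i : H →L[ℂ] ℂ).smulRight (lp.single 2 i (f i)) := by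
  classical
  refine ContinuousLinearMap.ext fun u => lp.ext (funext fun j => ?_)
  have hrhs : ((∑ i ∈ hf.toFinset,
      (evalCLM i : H →L[ℂ] ℂ).smulRight (lp.single 2 i (f i))) u) j
      = ∑ i ∈ hf.toFinset, (u i • lp.single 2 i (f i)) j := by
    rw [ContinuousLinearMap.sum_apply]
    have h2 := congrFun (lp.coeFn_sum
      (fun i => ((evalCLM i : H →L[ℂ] ℂ).smulRight
        (lp.single 2 i (f i) : lp (fun _ : ι => ℂ) 2)) u) hf.toFinset) j
    rw [h2, Finset.sum_apply]
    exact Finset.sum_congr rfl fun i _ => rfl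
  rw [hrhs]
  by_cases hj : j ∈ hf.toFinset
  · rw [Finset.sum_eq_single j]
    · simp only [lp.coeFn_smul, Pi.smul_apply, lp.single_apply_self, smul_eq_mul]
      change f j * u j = u j * f j
      ring
    · intro i _ hij
      simp only [lp.coeFn_smul, Pi.smul_apply, smul_eq_mul]
      rw [lp.single_apply_ne 2 i _ (Ne.symm hij)]
      ring
    · intro h; exact absurd hj h
  · have hfj : f j = 0 := by
      by_contra h
      exact hj (hf.mem_toFinset.2 h)
    have : ∀ i ∈ hf.toFinset,
        (u i • (lp.single 2 i (f i) : lp (fun _ : ι => ℂ) 2)) j = (0:ℂ) := by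
      intro i hi
      have hij : j ≠ i := by rintro rfl; exact hj hi
      simp only [lp.coeFn_smul, Pi.smul_apply, smul_eq_mul]
      rw [lp.single_apply_ne 2 i _ hij]
      ring
    rw [Finset.sum_eq_zero this]
    change f j * u j = 0
    rw [hfj, zero_mul]

lemma isCompactOperator_mulCLM_of_finite (f : ι → ℂ) (C : ℝ) (hC : ∀ i, ‖f i‖ ≤ C)
    (hf : {i | f i ≠ 0}.Finite) : IsCompactOperator ⇑(mulCLM f C hC) := by
  rw [mulCLM_eq_sum_of_finite f C hC hf]
  refine isCompactOperator_finsetSum _ _ (fun i _ => ?_)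
  have := isCompactOperator_smulRight (evalCLM i)
    (lp.single 2 i (f i) : lp (fun _ : ι => ℂ) 2)
  exact this

lemma isCompactOperator_mulCLM (f : ι → ℂ) (C : ℝ) (hC : ∀ i, ‖f i‖ ≤ C)
    (h0 : ∀ ε : ℝ, 0 < ε → {i | ε ≤ ‖f i‖}.Finite) :
    IsCompactOperator ⇑(mulCLM f C hC) := by
  classical
  set g : ℕ → ι → ℂ := fun N i => if (1/(N+1) : ℝ) ≤ ‖f i‖ then f i else 0 with hg
  have hgC : ∀ N i, ‖g N i‖ ≤ max C 0 := by
    intro N i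
    by_cases h : (1/(N+1):ℝ) ≤ ‖f i‖
    · simp only [hg, if_pos h]; exact (hC i).trans (le_max_left _ _)
    · simp only [hg, if_neg h, norm_zero]; exact le_max_right _ _
  set F : ℕ → (H →L[ℂ] H) := fun N => mulCLM (g N) (max C 0) (hgC N) with hF
  have hcmp : ∀ N, IsCompactOperator ⇑(F N) := by
    intro N
    refine isCompactOperator_mulCLM_of_finite _ _ _ ?_
    refine (h0 (1/(N+1)) (by positivity)).subset ?_
    intro i hi
    by_contra h
    simp only [Set.mem_setOf_eq] at h hi
    exact hi (by simp only [hg, if_neg h])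
  have hdiff : ∀ N : ℕ, ‖F N - mulCLM f C hC‖ ≤ 1/(N+1) := by
    intro N
    have hb : ∀ i, ‖g N i - f i‖ ≤ (1/(N+1) : ℝ) := by
      intro i
      by_cases h : (1/(N+1):ℝ) ≤ ‖f i‖
      · simp only [hg, if_pos h, sub_self, norm_zero]; positivity
      · simp only [hg, if_neg h, zero_sub, norm_neg]
        exact (not_le.1 h).le
    have heq : F N - mulCLM f C hC = mulCLM (fun i => g N i - f i) (1/(N+1)) hb := by
      refine ContinuousLinearMap.ext fun u => lp.ext (funext fun i => ?_)
      have : ((F N - mulCLM f C hC) u) i = (F N u) i - (mulCLM f C hC u) i := by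
        rw [ContinuousLinearMap.sub_apply]
        exact congrFun (lp.coeFn_sub (F N u) (mulCLM f C hC u)) i
      rw [this, mulCLM_apply, mulCLM_apply, mulCLM_apply]
      ring
    rw [heq]
    have := mulCLM_norm_le (fun i => g N i - f i) (1/(N+1)) hb
    have h1 : max (1/(N+1):ℝ) 0 = 1/(N+1) := max_eq_left (by positivity)
    rwa [h1] at this
  have htend : Filter.Tendsto F Filter.atTop (nhds (mulCLM f C hC)) := by
    rw [tendsto_iff_norm_sub_tendsto_zero]
    exact squeeze_zero (fun N => norm_nonneg _) hdiff tendsto_one_div_add_atTop_nhds_zero_nat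
  exact isCompactOperator_of_tendsto htend (Filter.Eventually.of_forall hcmp)

end CommAux

namespace CommAux

variable {d : ℕ}

/-- W from the problem statement (duplicated locally). -/

lemma sum_sq_pos {n : Fin d → ℤ} (hn : n ≠ 0) : 0 < ∑ j, ((n j : ℝ))^2 := by
  have : ∃ j, n j ≠ 0 := by
    by_contra h
    push_neg at h
    exact hn (funext h)
  obtain ⟨j, hj⟩ := this
  have hj' : 0 < ((n j : ℝ))^2 := by
    have : (n j : ℝ) ≠ 0 := Int.cast_ne_zero.2 hj
    positivity
  exact Finset.sum_pos' (fun i _ => sq_nonneg _) ⟨j, Finset.mem_univ j, hj'⟩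

lemma one_le_sum_sq {n : Fin d → ℤ} (hn : n ≠ 0) : (1:ℝ) ≤ ∑ j, ((n j : ℝ))^2 := by
  have : ∃ j, n j ≠ 0 := by
    by_contra h
    push_neg at h
    exact hn (funext h)
  obtain ⟨j, hj⟩ := this
  have h1 : (1:ℝ) ≤ ((n j : ℝ))^2 := by
    have h2 : (1:ℤ) ≤ (n j)^2 := by
      rcases lt_or_gt_of_ne hj with h|h <;> nlinarith
    exact_mod_cast h2
  calc (1:ℝ) ≤ ((n j:ℝ))^2 := h1
    _ ≤ ∑ i, ((n i : ℝ))^2 :=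
        Finset.single_le_sum (fun i _ => sq_nonneg ((n i : ℝ))) (Finset.mem_univ j)

lemma one_le_sqrt_sum_sq {n : Fin d → ℤ} (hn : n ≠ 0) :
    (1:ℝ) ≤ Real.sqrt (∑ j, ((n j : ℝ))^2) := by
  rw [show (1:ℝ) = Real.sqrt 1 from (Real.sqrt_one).symm]
  exact Real.sqrt_le_sqrt (one_le_sum_sq hn)

lemma sum_cast_update_zero (i : Fin d) (a : ℤ) :
    ∑ j, ((Function.update (0 : Fin d → ℤ) i a j : ℝ)) = (a : ℝ) := by
  rw [Finset.sum_eq_single i]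
  · rw [Function.update_self]
  · intro b _ hb
    rw [Function.update_of_ne hb]
    simp
  · intro h; exact absurd (Finset.mem_univ i) h

lemma sum_sq_cast_update_zero (i : Fin d) (a : ℤ) :
    ∑ j, ((Function.update (0 : Fin d → ℤ) i a j : ℝ))^2 = (a : ℝ)^2 := by
  rw [Finset.sum_eq_single i]
  · rw [Function.update_self]
  · intro b _ hb
    rw [Function.update_of_ne hb]
    simp
  · intro h; exact absurd (Finset.mem_univ i) h

lemma coef (q k : ℝ) (i : Fin d) (n : Fin d → ℤ) (e : ℤ) (he : e = 1 ∨ e = -1) :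
    (e:ℝ) * ((n i : ℝ) + (e:ℝ)/2) *
      (WvN d q k n - WvN d q k (Function.update n i (n i + e)))
    = (WvN d q k n + WvN d q k (Function.update n i (n i + e)))/2
      + (e:ℝ) * (Ufun d i n * WvNt d q k n
        - WvNt d q k (Function.update n i (n i + e)) * Ufun d i (Function.update n i (n i + e))) := by
  have he0 : e ≠ 0 := by rcases he with rfl | rfl <;> norm_num
  have hsq : Real.sqrt ((e:ℝ)^2) = 1 := by
    rcases he with rfl | rfl <;> norm_num
  by_cases hn : n = 0
  · subst hn
    simp only [Pi.zero_apply, zero_add, Int.cast_zero]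
    have hne : Function.update (0:Fin d → ℤ) i e ≠ 0 := by
      intro h
      have h2 := congrFun h i
      rw [Function.update_self] at h2
      exact he0 h2
    simp only [WvN, WvNt, Ufun]
    simp only [if_true]
    rw [if_neg hne, if_neg hne]
    rw [sum_cast_update_zero, sum_sq_cast_update_zero, hsq, Function.update_self]
    have hz : ∑ j, (((0:Fin d → ℤ) j : ℝ)) = 0 := by simp
    rw [hz, mul_zero, Real.sin_zero]
    rcases he with rfl | rfl <;> push_cast <;> ring
  · by_cases hm : Function.update n i (n i + e) = 0
    · have hni : n i = -e := by
        have h2 := congrFun hm i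
        rw [Function.update_self] at h2
        simp only [Pi.zero_apply] at h2
        omega
      have hnj : ∀ j, j ≠ i → n j = 0 := by
        intro j hj
        have h2 := congrFun hm j
        rw [Function.update_of_ne hj] at h2
        simpa using h2
      have hs1 : ∑ j, ((n j : ℝ)) = ((n i : ℝ)) := by
        rw [Finset.sum_eq_single i]
        · intro b _ hb; rw [hnj b hb]; simp
        · intro h; exact absurd (Finset.mem_univ i) h
      have hs2 : ∑ j, ((n j : ℝ))^2 = ((n i : ℝ))^2 := by
        rw [Finset.sum_eq_single i]
        · intro b _ hb; rw [hnj b hb]; simp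
        · intro h; exact absurd (Finset.mem_univ i) h
      have hni' : ((n i : ℝ)) = -((e:ℤ):ℝ) := by exact_mod_cast congrArg (fun z : ℤ => (z:ℝ)) hni
      rw [hm]
      simp only [WvN, WvNt, Ufun]
      simp only [if_true]
      rw [if_neg hn, if_neg hn]
      have hz : ∑ j, (((0:Fin d → ℤ) j : ℝ)) = 0 := by simp
      rw [hz, hs1, hs2, hni']
      simp only [mul_zero, Real.sin_zero, neg_sq, hsq]
      rcases he with rfl | rfl <;> push_cast <;> ring
    · have hr : Real.sqrt (∑ j, ((n j : ℝ))^2) ≠ 0 := (Real.sqrt_pos.2 (sum_sq_pos hn)).ne'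
      have hr' : Real.sqrt (∑ j, ((Function.update n i (n i + e) j : ℝ))^2) ≠ 0 :=
        (Real.sqrt_pos.2 (sum_sq_pos hm)).ne'
      simp only [WvN, WvNt, Ufun]
      rw [if_neg hn, if_neg hn, if_neg hm, if_neg hm]
      rw [Function.update_self]
      push_cast
      field_simp
      rcases he with rfl | rfl <;> push_cast <;> ring
end CommAux

namespace CommAux

variable {d : ℕ}

lemma normC (r : ℝ) : ‖(r:ℂ)‖ = |r| := by
  rw [Complex.norm_real, Real.norm_eq_abs]

lemma normW_le (q k : ℝ) (n : Fin d → ℤ) : ‖((WvN d q k n : ℝ) : ℂ)‖ ≤ |q| := by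
  rw [normC, WvN]
  by_cases hn : n = 0
  · rw [if_pos hn]
  · rw [if_neg hn, abs_div, abs_mul]
    have h1 : |Real.sqrt (∑ j, ((n j : ℝ))^2)| = Real.sqrt (∑ j, ((n j : ℝ))^2) :=
      abs_of_nonneg (Real.sqrt_nonneg _)
    rw [h1]
    calc |q| * |Real.sin (k * ∑ j, ((n j:ℝ)))| / Real.sqrt (∑ j, ((n j : ℝ))^2)
        ≤ |q| * 1 / 1 := by
          apply div_le_div₀ (by positivity)
            (mul_le_mul_of_nonneg_left (Real.abs_sin_le_one _) (abs_nonneg q))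
            one_pos (one_le_sqrt_sum_sq hn)
      _ = |q| := by ring

lemma absU_le (i : Fin d) (n : Fin d → ℤ) : |Ufun d i n| ≤ 1 := by
  rw [Ufun]
  by_cases hn : n = 0
  · rw [if_pos hn]; norm_num
  · rw [if_neg hn, abs_div, abs_of_nonneg (Real.sqrt_nonneg _)]
    rw [div_le_one (Real.sqrt_pos.2 (sum_sq_pos hn))]
    calc |(n i : ℝ)| = Real.sqrt (((n i:ℝ))^2) := (Real.sqrt_sq_eq_abs _).symm
      _ ≤ Real.sqrt (∑ j, ((n j:ℝ))^2) :=
          Real.sqrt_le_sqrt (Finset.single_le_sum (fun j _ => sq_nonneg ((n j:ℝ)))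
            (Finset.mem_univ i))

lemma absWt_le (q k : ℝ) (n : Fin d → ℤ) : |WvNt d q k n| ≤ |q| := by
  rw [WvNt, abs_mul]
  calc |q| * |Real.sin (k * ∑ j, ((n j:ℝ)))| ≤ |q| * 1 :=
      mul_le_mul_of_nonneg_left (Real.abs_sin_le_one _) (abs_nonneg q)
    _ = |q| := mul_one _

lemma normUW_le (q k : ℝ) (i : Fin d) (n : Fin d → ℤ) :
    ‖((Ufun d i n : ℝ) : ℂ) * ((WvNt d q k n : ℝ) : ℂ)‖ ≤ |q| := by
  rw [norm_mul, normC, normC]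
  calc |Ufun d i n| * |WvNt d q k n| ≤ 1 * |q| :=
      mul_le_mul (absU_le i n) (absWt_le q k n) (abs_nonneg _) one_pos.le
    _ = |q| := one_mul _

lemma normWU_le (q k : ℝ) (i : Fin d) (n : Fin d → ℤ) :
    ‖((WvNt d q k n : ℝ) : ℂ) * ((Ufun d i n : ℝ) : ℂ)‖ ≤ |q| := by
  rw [mul_comm]; exact normUW_le q k i n

lemma W_decay (q k : ℝ) (ε : ℝ) (hε : 0 < ε) :
    {n : Fin d → ℤ | ε ≤ ‖((WvN d q k n : ℝ) : ℂ)‖}.Finite := by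
  set M : ℤ := ⌈|q|/ε⌉ with hM
  have hfin : (Set.pi Set.univ (fun _ : Fin d => (Set.Icc (-M) M : Set ℤ))).Finite :=
    Set.Finite.pi (fun _ => Set.finite_Icc _ _)
  refine ((hfin.union (Set.finite_singleton 0)).subset ?_)
  intro n hn
  by_cases h0 : n = 0
  · exact Or.inr h0
  · left
    intro j _
    simp only [Set.mem_Icc]
    have hεn : ε ≤ |WvN d q k n| := by rw [← normC]; exact hn
    have hr : 0 < Real.sqrt (∑ l, ((n l:ℝ))^2) := Real.sqrt_pos.2 (sum_sq_pos h0)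
    have hW : |WvN d q k n| ≤ |q| / Real.sqrt (∑ l, ((n l:ℝ))^2) := by
      rw [WvN, if_neg h0, abs_div, abs_mul, abs_of_nonneg (Real.sqrt_nonneg _)]
      have hnum : |q| * |Real.sin (k * ∑ l, ((n l:ℝ)))| ≤ |q| := by
        calc |q| * |Real.sin (k * ∑ l, ((n l:ℝ)))| ≤ |q| * 1 :=
            mul_le_mul_of_nonneg_left (Real.abs_sin_le_one _) (abs_nonneg q)
          _ = |q| := mul_one _
      exact div_le_div_of_nonneg_right hnum hr.le |>.trans le_rfl
    have h2 : ε ≤ |q| / Real.sqrt (∑ l, ((n l:ℝ))^2) := hεn.trans hW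
    have h3 : Real.sqrt (∑ l, ((n l:ℝ))^2) ≤ |q| / ε := by
      rw [le_div_iff₀ hε]
      have := (le_div_iff₀ hr).1 h2
      linarith [this]
    have h4 : |(n j : ℝ)| ≤ |q| / ε := by
      calc |(n j:ℝ)| = Real.sqrt (((n j:ℝ))^2) := (Real.sqrt_sq_eq_abs _).symm
        _ ≤ Real.sqrt (∑ l, ((n l:ℝ))^2) :=
            Real.sqrt_le_sqrt (Finset.single_le_sum (f := fun l => ((n l:ℝ))^2)
              (fun l _ => sq_nonneg _) (Finset.mem_univ j))
        _ ≤ |q| / ε := h3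
    have h5 : ((|n j| : ℤ) : ℝ) ≤ (M : ℝ) := by
      rw [Int.cast_abs]
      exact h4.trans (Int.le_ceil _)
    have h6 : |n j| ≤ M := by exact_mod_cast h5
    constructor <;> [linarith [abs_le.1 h6 |>.1]; exact (abs_le.1 h6).2]

/-- The coordinate-increment bijection. -/
def updP (d : ℕ) (i : Fin d) : (Fin d → ℤ) ≃ (Fin d → ℤ) where
  toFun n := Function.update n i (n i + 1)
  invFun n := Function.update n i (n i - 1)
  left_inv n := by
    show Function.update (Function.update n i (n i + 1)) i
        ((Function.update n i (n i + 1)) i - 1) = n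
    rw [Function.update_self, Function.update_idem, add_sub_cancel_right,
      Function.update_eq_self]
  right_inv n := by
    show Function.update (Function.update n i (n i - 1)) i
        ((Function.update n i (n i - 1)) i + 1) = n
    rw [Function.update_self, Function.update_idem, sub_add_cancel,
      Function.update_eq_self]

def SP (d : ℕ) (i : Fin d) : l2Zd d →L[ℂ] l2Zd d := shiftCLM (updP d i)

def SM (d : ℕ) (i : Fin d) : l2Zd d →L[ℂ] l2Zd d := shiftCLM (updP d i).symm

@[simp] lemma SP_apply (i : Fin d) (u : l2Zd d) (n : Fin d → ℤ) :
    (SP d i u) n = u (Function.update n i (n i + 1)) := rfl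

@[simp] lemma SM_apply (i : Fin d) (u : l2Zd d) (n : Fin d → ℤ) :
    (SM d i u) n = u (Function.update n i (n i - 1)) := rfl

def Top (d : ℕ) : l2Zd d →L[ℂ] l2Zd d := ∑ i : Fin d, (SP d i + SM d i)

lemma Top_apply (u : l2Zd d) (n : Fin d → ℤ) :
    (Top d u) n = ∑ i : Fin d,
      (u (Function.update n i (n i + 1)) + u (Function.update n i (n i - 1))) := by
  rw [Top, ContinuousLinearMap.sum_apply]
  rw [congrFun (lp.coeFn_sum (fun i => (SP d i + SM d i) u) Finset.univ) n, Finset.sum_apply]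
  refine Finset.sum_congr rfl fun i _ => ?_
  rw [ContinuousLinearMap.add_apply, congrFun (lp.coeFn_add (SP d i u) (SM d i u)) n,
    Pi.add_apply]
  rfl

def DI (d : ℕ) (i : Fin d) : l2Zd d →L[ℂ] l2Zd d := SP d i - SM d i

lemma DI_apply (i : Fin d) (u : l2Zd d) (n : Fin d → ℤ) :
    (DI d i u) n = u (Function.update n i (n i + 1)) - u (Function.update n i (n i - 1)) := by
  rw [DI, ContinuousLinearMap.sub_apply, congrFun (lp.coeFn_sub (SP d i u) (SM d i u)) n,
    Pi.sub_apply]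
  rfl

def MW (d : ℕ) (q k : ℝ) : l2Zd d →L[ℂ] l2Zd d :=
  mulCLM (fun n => ((WvN d q k n : ℝ) : ℂ)) |q| (normW_le q k)

def KWop (d : ℕ) (q k : ℝ) : l2Zd d →L[ℂ] l2Zd d :=
  (1/2 : ℂ) • (MW d q k ∘L Top d + Top d ∘L MW d q k)

def BWop (d : ℕ) (q k : ℝ) : l2Zd d →L[ℂ] l2Zd d :=
  ∑ i : Fin d,
    (mulCLM (fun n => ((Ufun d i n : ℝ) : ℂ) * ((WvNt d q k n : ℝ) : ℂ)) |q| (normUW_le q k i)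
        ∘L DI d i
      - DI d i ∘L
        mulCLM (fun n => ((WvNt d q k n : ℝ) : ℂ) * ((Ufun d i n : ℝ) : ℂ)) |q| (normWU_le q k i))

lemma KW_apply (q k : ℝ) (u : l2Zd d) (n : Fin d → ℤ) :
    (KWop d q k u) n = KWfun d q k (⇑u) n := by
  rw [KWop, ContinuousLinearMap.smul_apply,
    congrFun (lp.coeFn_smul (1/2 : ℂ) ((MW d q k ∘L Top d + Top d ∘L MW d q k) u)) n,
    Pi.smul_apply, smul_eq_mul]
  rw [ContinuousLinearMap.add_apply,
    congrFun (lp.coeFn_add ((MW d q k ∘L Top d) u) ((Top d ∘L MW d q k) u)) n, Pi.add_apply]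
  rw [ContinuousLinearMap.comp_apply, ContinuousLinearMap.comp_apply]
  have h1 : (MW d q k (Top d u)) n = ((WvN d q k n : ℝ) : ℂ) * (Top d u) n := rfl
  rw [h1, Top_apply u n, Top_apply (MW d q k u) n]
  have h2 : (∑ i : Fin d, ((MW d q k u) (Function.update n i (n i + 1))
        + (MW d q k u) (Function.update n i (n i - 1))))
      = ∑ i : Fin d,
        (((WvN d q k (Function.update n i (n i + 1)) : ℝ) : ℂ) * u (Function.update n i (n i + 1))
        + ((WvN d q k (Function.update n i (n i - 1)) : ℝ) : ℂ) * u (Function.update n i (n i - 1))) :=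
    Finset.sum_congr rfl fun i _ => rfl
  rw [h2, KWfun]

lemma BW_apply (q k : ℝ) (u : l2Zd d) (n : Fin d → ℤ) :
    (BWop d q k u) n = BWfun d q k (⇑u) n := by
  rw [BWop, ContinuousLinearMap.sum_apply]
  rw [congrFun (lp.coeFn_sum (fun i : Fin d =>
    (mulCLM (fun n => ((Ufun d i n : ℝ) : ℂ) * ((WvNt d q k n : ℝ) : ℂ)) |q| (normUW_le q k i)
        ∘L DI d i
      - DI d i ∘L
        mulCLM (fun n => ((WvNt d q k n : ℝ) : ℂ) * ((Ufun d i n : ℝ) : ℂ)) |q| (normWU_le q k i)) u)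
    Finset.univ) n, Finset.sum_apply, BWfun]
  refine Finset.sum_congr rfl fun i _ => ?_
  rw [ContinuousLinearMap.sub_apply]
  rw [congrFun (lp.coeFn_sub
    ((mulCLM (fun n => ((Ufun d i n : ℝ) : ℂ) * ((WvNt d q k n : ℝ) : ℂ)) |q| (normUW_le q k i)
        ∘L DI d i) u)
    ((DI d i ∘L
        mulCLM (fun n => ((WvNt d q k n : ℝ) : ℂ) * ((Ufun d i n : ℝ) : ℂ)) |q| (normWU_le q k i)) u)) n,
    Pi.sub_apply]
  rw [ContinuousLinearMap.comp_apply, ContinuousLinearMap.comp_apply]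
  rw [show (mulCLM (fun n => ((Ufun d i n : ℝ) : ℂ) * ((WvNt d q k n : ℝ) : ℂ)) |q| (normUW_le q k i)
      (DI d i u)) n = ((Ufun d i n : ℝ) : ℂ) * ((WvNt d q k n : ℝ) : ℂ) * (DI d i u) n from rfl]
  rw [DI_apply, DI_apply]
  rfl

end CommAux

namespace CommAux

lemma Imul (x y z : ℂ) :
    Complex.I * (x * (Complex.I * y) - Complex.I * z) = -(x * y - z) := by
  linear_combination (x * y - z) * Complex.I_sq

end CommAux
/-- K_W is compact, B_W is bounded, and the commutator form [W, iA₀] extends to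
the bounded operator K_W + B_W: for all finitely supported u,
i(W(A₀u) − A₀(Wu)) = (K_W + B_W)u. -/
theorem WvN_A0_commutator (d : ℕ) (hd : 1 ≤ d) (q : ℝ) (hq : q ≠ 0) (k : ℝ)
    (hk : ∀ m : ℤ, k ≠ m * Real.pi) :
    ∃ KW BW : l2Zd d →L[ℂ] l2Zd d,
      (∀ (u : l2Zd d) (n : Fin d → ℤ), (KW u) n = KWfun d q k (⇑u) n) ∧
      (∀ (u : l2Zd d) (n : Fin d → ℤ), (BW u) n = BWfun d q k (⇑u) n) ∧
      IsCompactOperator (⇑KW) ∧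
      ∀ u : (Fin d → ℤ) → ℂ, (Function.support u).Finite → ∀ n : Fin d → ℤ,
        Complex.I * ((WvN d q k n : ℂ) * A0fun d u n -
            A0fun d (fun m => (WvN d q k m : ℂ) * u m) n) =
          KWfun d q k u n + BWfun d q k u n := by
  classical
  refine ⟨CommAux.KWop d q k, CommAux.BWop d q k, CommAux.KW_apply q k, CommAux.BW_apply q k,
    ?_, ?_⟩
  · -- compactness of K_W
    have hMW : IsCompactOperator ⇑(CommAux.MW d q k) :=
      CommAux.isCompactOperator_mulCLM _ _ _ (fun ε hε => CommAux.W_decay q k ε hε)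
    have h1 : IsCompactOperator ⇑(CommAux.MW d q k ∘L CommAux.Top d) := by
      rw [ContinuousLinearMap.coe_comp']
      exact hMW.comp_clm _
    have h2 : IsCompactOperator ⇑(CommAux.Top d ∘L CommAux.MW d q k) := by
      rw [ContinuousLinearMap.coe_comp']
      exact hMW.clm_comp _
    exact ((h1.add h2).smul ((1:ℂ)/2))
  · -- the commutator identity
    intro u _ n
    rw [A0fun, A0fun, CommAux.Imul]
    rw [KWfun, BWfun]
    rw [Finset.mul_sum]
    rw [← Finset.sum_sub_distrib, ← Finset.sum_neg_distrib]
    rw [Finset.mul_sum]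
    rw [← Finset.sum_add_distrib]
    rw [Finset.mul_sum]
    rw [← Finset.sum_add_distrib]
    refine Finset.sum_congr rfl fun i _ => ?_
    have hA := CommAux.coef q k i n 1 (Or.inl rfl)
    have hB := CommAux.coef q k i n (-1) (Or.inr rfl)
    have hA' := congrArg (fun x : ℝ => (x : ℂ)) hA
    have hB' := congrArg (fun x : ℝ => (x : ℂ)) hB
    push_cast at hA' hB'
    rw [show n i + (-1:ℤ) = n i - 1 from by ring] at hB'
    linear_combination u (Function.update n i (n i + 1)) * hA'
      + u (Function.update n i (n i - 1)) * hB'
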